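/- Suppose (X,J) has the CQLP and {π(xₙ)} is a relatively compact sequence in X/J. Then there exists a relatively compact sequence {zₙ} ⊂ X with π(zₙ) = π(xₙ) for all n and sup‖zₙ‖ (indeed the norm of the associated operator) equal to that of {π(xₙ)}. -/

import Mathlib

open scoped ENNReal
open Set
set_option linter.unusedSectionVars false

section SumOp

variable {Y : Type*} [NormedAddCommGroup Y] [NormedSpace ℝ Y] [CompleteSpace Y]

lemma l1_summable_norm (a : lp (fun _ : ℕ => ℝ) 1) : Summable fun n => ‖a n‖ := by
  have := (lp.memℓp a).summable (p := 1) (by norm_num)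
  simpa using this

lemma l1_smul_norm_le (y : ℕ → Y) {C : ℝ} (hC : ∀ n, ‖y n‖ ≤ C)
    (a : lp (fun _ : ℕ => ℝ) 1) (n : ℕ) : ‖a n • y n‖ ≤ ‖a n‖ * C := by
  rw [norm_smul]
  exact mul_le_mul_of_nonneg_left (hC n) (norm_nonneg _)

lemma l1_summable_norm_smul (y : ℕ → Y) {C : ℝ} (hC : ∀ n, ‖y n‖ ≤ C)
    (a : lp (fun _ : ℕ => ℝ) 1) : Summable fun n => ‖a n • y n‖ :=
  Summable.of_nonneg_of_le (fun _ => norm_nonneg _) (l1_smul_norm_le y hC a)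
    ((l1_summable_norm a).mul_right C)

lemma l1_summable_smul (y : ℕ → Y) {C : ℝ} (hC : ∀ n, ‖y n‖ ≤ C)
    (a : lp (fun _ : ℕ => ℝ) 1) : Summable fun n => a n • y n :=
  Summable.of_norm (l1_summable_norm_smul y hC a)

lemma l1_norm_eq (a : lp (fun _ : ℕ => ℝ) 1) : ‖a‖ = ∑' n, ‖a n‖ := by
  have := lp.norm_eq_tsum_rpow (p := 1) (by norm_num) a
  simpa using this

noncomputable def sumOp (y : ℕ → Y) {C : ℝ} (hC : ∀ n, ‖y n‖ ≤ C) :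
    lp (fun _ : ℕ => ℝ) 1 →L[ℝ] Y :=
  LinearMap.mkContinuous
    { toFun := fun a => ∑' n, a n • y n
      map_add' := fun a b => by
        have ha := l1_summable_smul y hC a
        have hb := l1_summable_smul y hC b
        have h : ∀ n, ((a + b : lp (fun _ : ℕ => ℝ) 1) n) • y n = a n • y n + b n • y n := by
          intro n
          rw [lp.coeFn_add]
          simp [add_smul]
        simp only [h]
        exact Summable.tsum_add ha hb
      map_smul' := fun c a => by
        have ha := l1_summable_smul y hC a
        have h : ∀ n, ((c • a : lp (fun _ : ℕ => ℝ) 1) n) • y n = c • (a n • y n) := by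
          intro n
          rw [lp.coeFn_smul]
          simp [smul_smul]
        simp only [h, RingHom.id_apply]
        exact Summable.tsum_const_smul c ha } C
    (by
      intro a
      calc ‖∑' n, a n • y n‖ ≤ ∑' n, ‖a n • y n‖ :=
            norm_tsum_le_tsum_norm (l1_summable_norm_smul y hC a)
        _ ≤ ∑' n, ‖a n‖ * C :=
            Summable.tsum_le_tsum (l1_smul_norm_le y hC a) (l1_summable_norm_smul y hC a)
              ((l1_summable_norm a).mul_right C)
        _ = (∑' n, ‖a n‖) * C := tsum_mul_right
        _ = C * ‖a‖ := by rw [l1_norm_eq]; ring)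

lemma sumOp_apply (y : ℕ → Y) {C : ℝ} (hC : ∀ n, ‖y n‖ ≤ C) (a : lp (fun _ : ℕ => ℝ) 1) :
    sumOp y hC a = ∑' n, a n • y n := rfl

lemma sumOp_norm_le (y : ℕ → Y) {C : ℝ} (hC : ∀ n, ‖y n‖ ≤ C) :
    ‖sumOp y hC‖ ≤ C :=
  LinearMap.mkContinuous_norm_le _ (le_trans (norm_nonneg _) (hC 0)) _

lemma sumOp_single (y : ℕ → Y) {C : ℝ} (hC : ∀ n, ‖y n‖ ≤ C) (n : ℕ) :
    sumOp y hC (lp.single 1 n (1 : ℝ)) = y n := by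
  rw [sumOp_apply]
  rw [tsum_eq_single n]
  · rw [lp.single_apply_self, one_smul]
  · intro b hb
    rw [lp.single_apply_ne 1 n _ hb, zero_smul]

lemma norm_single_one (n : ℕ) : ‖(lp.single 1 n (1 : ℝ) : lp (fun _ : ℕ => ℝ) 1)‖ = 1 := by
  have := lp.norm_single (E := fun _ : ℕ => ℝ) (p := 1) (by norm_num) n (1 : ℝ)
  simpa using this

/-- Partial sums with ℓ¹-coefficient mass ≤ 1 lie in the convex hull of
`[-1,1] • (closure of range y)`. -/
lemma partial_sum_mem_convexHull (y : ℕ → Y) (a : ℕ → ℝ) (s : Finset ℕ)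
    (hs : ∑ n ∈ s, |a n| ≤ 1) :
    ∑ n ∈ s, a n • y n ∈
      convexHull ℝ ((fun p : ℝ × Y => p.1 • p.2) '' (Set.Icc (-1 : ℝ) 1 ×ˢ closure (range y))) := by
  set A : Set Y := (fun p : ℝ × Y => p.1 • p.2) '' (Set.Icc (-1 : ℝ) 1 ×ˢ closure (range y)) with hA
  have hmemA : ∀ t : ℝ, |t| ≤ 1 → ∀ n : ℕ, t • y n ∈ A := by
    intro t ht n
    exact ⟨(t, y n), ⟨abs_le.mp ht, subset_closure (mem_range_self n)⟩, rfl⟩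
  -- write the sum as a convex combination over `Option`-style index via insert
  classical
  set v : ℕ → Y := fun n => (if a n = 0 then (0 : ℝ) else a n / |a n|) • y n with hv
  have hvA : ∀ n, v n ∈ A := by
    intro n
    refine hmemA _ ?_ n
    by_cases h : a n = 0
    · simp [h]
    · rw [if_neg h, abs_div, abs_abs, div_self (abs_ne_zero.mpr h)]
  have hzero : (0 : Y) ∈ A := by simpa using hmemA 0 (by norm_num) 0
  -- index over an element not in s
  obtain ⟨m, hm⟩ : ∃ m, m ∉ s := Infinite.exists_notMem_finset s
  set w : ℕ → ℝ := fun n => if n = m then 1 - ∑ k ∈ s, |a k| else |a n| with hw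
  set pt : ℕ → Y := fun n => if n = m then 0 else v n with hpt
  have hconv : ∑ n ∈ insert m s, w n • pt n ∈ convexHull ℝ A := by
    apply (convex_convexHull ℝ A).sum_mem
    · intro i hi
      by_cases h : i = m
      · simp only [hw, h, if_pos rfl]
        linarith
      · simp only [hw, if_neg h]
        exact abs_nonneg _
    · rw [Finset.sum_insert hm]
      simp only [hw, if_pos rfl]
      rw [Finset.sum_ite_of_false (by intro i hi; exact fun h => hm (h ▸ hi))]
      ring
    · intro i _
      by_cases h : i = m
      · simp only [hpt, h, if_pos rfl]
        exact subset_convexHull ℝ A hzero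
      · simp only [hpt, if_neg h]
        exact subset_convexHull ℝ A (hvA i)
  have heq : ∑ n ∈ insert m s, w n • pt n = ∑ n ∈ s, a n • y n := by
    rw [Finset.sum_insert hm]
    simp only [hpt, hw, if_pos rfl, smul_zero, zero_add]
    apply Finset.sum_congr rfl
    intro i hi
    have h : i ≠ m := fun h => hm (h ▸ hi)
    rw [if_neg h, if_neg h]
    by_cases h0 : a i = 0
    · simp [hv, h0]
    · simp only [hv, if_neg h0, smul_smul]
      rw [mul_comm, div_mul_cancel₀ _ (abs_ne_zero.mpr h0)]
  rw [← heq]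
  exact hconv

end SumOp

section Compactness
variable {Y : Type*} [NormedAddCommGroup Y] [NormedSpace ℝ Y] [CompleteSpace Y]

lemma sumOp_isCompactOperator (y : ℕ → Y) {C : ℝ} (hC : ∀ n, ‖y n‖ ≤ C)
    (hy : IsCompact (closure (range y))) : IsCompactOperator (sumOp y hC) := by
  rw [isCompactOperator_iff_exists_mem_nhds_image_subset_compact]
  set A : Set Y := (fun p : ℝ × Y => p.1 • p.2) '' (Set.Icc (-1 : ℝ) 1 ×ˢ closure (range y))
    with hA
  have hAcomp : IsCompact A := (isCompact_Icc.prod hy).image (continuous_fst.smul continuous_snd)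
  have hK : IsCompact (closure (convexHull ℝ A)) :=
    TotallyBounded.isCompact_of_isClosed
      ((totallyBounded_convexHull.mpr hAcomp.totallyBounded).closure) isClosed_closure
  refine ⟨Metric.closedBall 0 1, Metric.closedBall_mem_nhds 0 one_pos,
    closure (convexHull ℝ A), hK, ?_⟩
  rintro _ ⟨a, ha, rfl⟩
  have hnorm : ‖a‖ ≤ 1 := by simpa using Metric.mem_closedBall.mp ha
  have hsum : HasSum (fun n => a n • y n) (sumOp y hC a) := (l1_summable_smul y hC a).hasSum
  refine mem_closure_of_tendsto hsum.tendsto_sum_nat ?_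
  filter_upwards with N
  apply partial_sum_mem_convexHull
  calc ∑ n ∈ Finset.range N, |a n| ≤ ∑' n, ‖a n‖ := by
        have h := Summable.sum_le_tsum (Finset.range N) (fun i _ => norm_nonneg (a i)) (l1_summable_norm a)
        simpa [Real.norm_eq_abs] using h
    _ = ‖a‖ := (l1_norm_eq a).symm
    _ ≤ 1 := hnorm

end Compactness

/-- (X,J) has the compact quotient lifting property (CQLP). -/
def HasCQLP (X : Type*) [NormedAddCommGroup X] [NormedSpace ℝ X] (J : Submodule ℝ X) : Prop :=
  ∀ (Z : Type) [NormedAddCommGroup Z] [NormedSpace ℝ Z] [CompleteSpace Z]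
    (T : Z →L[ℝ] X ⧸ J), IsCompactOperator T → ∃ S : Z →L[ℝ] X, IsCompactOperator S ∧
      (∀ z : Z, (Submodule.Quotient.mk (S z) : X ⧸ J) = T z) ∧ ‖S‖ = ‖T‖

/-- If (X,J) has the CQLP and {π(xₙ)} is a relatively compact sequence in X/J,
then there is a relatively compact sequence {zₙ} ⊆ X with π(zₙ) = π(xₙ) for all n and with
the same bound: sup ‖zₙ‖ = sup ‖π(xₙ)‖. -/
theorem stmt_6 (X : Type*) [NormedAddCommGroup X] [NormedSpace ℝ X] [CompleteSpace X]
    (J : Submodule ℝ X) (hJ : IsClosed (J : Set X)) (h : HasCQLP X J)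
    (x : ℕ → X)
    (hx : IsCompact (closure (Set.range (fun n => (Submodule.Quotient.mk (x n) : X ⧸ J))))) :
    ∃ z : ℕ → X, IsCompact (closure (Set.range z)) ∧
      (∀ n, (Submodule.Quotient.mk (z n) : X ⧸ J) = Submodule.Quotient.mk (x n)) ∧
      (⨆ n, ‖z n‖) = ⨆ n, ‖(Submodule.Quotient.mk (x n) : X ⧸ J)‖ := by
  classical
  set y : ℕ → X ⧸ J := fun n => (Submodule.Quotient.mk (x n) : X ⧸ J) with hy
  obtain ⟨r, hr⟩ := hx.isBounded.subset_closedBall 0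
  have hCbdd : BddAbove (range fun n => ‖y n‖) := by
    refine ⟨r, ?_⟩
    rintro _ ⟨n, rfl⟩
    have hmem : y n ∈ closure (range y) := subset_closure (mem_range_self n)
    simpa using hr hmem
  set C := ⨆ n, ‖y n‖ with hCdef
  have hC : ∀ n, ‖y n‖ ≤ C := fun n => le_ciSup hCbdd n
  have hT : IsCompactOperator (sumOp y hC) := sumOp_isCompactOperator y hC hx
  obtain ⟨S, hScomp, hSlift, hSnorm⟩ := h (lp (fun _ : ℕ => ℝ) 1) (sumOp y hC) hT
  set z : ℕ → X := fun n => S (lp.single 1 n (1 : ℝ)) with hz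
  have hπ : ∀ n, (Submodule.Quotient.mk (z n) : X ⧸ J) = Submodule.Quotient.mk (x n) := by
    intro n
    rw [hz]
    rw [hSlift (lp.single 1 n (1 : ℝ)), sumOp_single y hC n]
  have hzS : ∀ n, ‖z n‖ ≤ ‖S‖ := by
    intro n
    calc ‖z n‖ ≤ ‖S‖ * ‖(lp.single 1 n (1 : ℝ) : lp (fun _ : ℕ => ℝ) 1)‖ := S.le_opNorm _
      _ = ‖S‖ := by rw [norm_single_one, mul_one]
  have hzbdd : BddAbove (range fun n => ‖z n‖) := by
    refine ⟨‖S‖, ?_⟩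
    rintro _ ⟨n, rfl⟩
    exact hzS n
  refine ⟨z, ?_, hπ, ?_⟩
  · have h1 : IsCompact (closure (⇑S '' Metric.closedBall 0 1)) :=
      IsCompactOperator.isCompact_closure_image_of_bounded (f := (S : lp (fun _ : ℕ => ℝ) 1 →ₗ[ℝ] X))
        hScomp Metric.isBounded_closedBall
    have hsub : range z ⊆ ⇑S '' Metric.closedBall 0 1 := by
      rintro _ ⟨n, rfl⟩
      exact ⟨lp.single 1 n (1 : ℝ), by simp [Metric.mem_closedBall, norm_single_one], rfl⟩
    exact h1.of_isClosed_subset isClosed_closure (closure_mono hsub)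
  · apply le_antisymm
    · refine ciSup_le fun n => ?_
      calc ‖z n‖ ≤ ‖S‖ := hzS n
        _ = ‖sumOp y hC‖ := hSnorm
        _ ≤ C := sumOp_norm_le y hC
    · refine ciSup_le fun n => ?_
      calc ‖y n‖ = ‖(Submodule.Quotient.mk (z n) : X ⧸ J)‖ := by rw [hπ n]
        _ ≤ ‖z n‖ := Submodule.Quotient.norm_mk_le J (z n)
        _ ≤ ⨆ n, ‖z n‖ := le_ciSup hzbdd n
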